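/- Let s satisfy s''(t) = 6 t - 6 s(t)^2 on [0, ∞) with s(0) = s'(0) = 0. Then s(t) > 0 for all t > 0. -/

import Mathlib

open Set MeasureTheory intervalIntegral

-- Step 1: positivity near 0
theorem painleve_aux
    (s : ℝ → ℝ)
    (hdiff : ∀ t ∈ Ici (0 : ℝ), DifferentiableAt ℝ s t ∧ DifferentiableAt ℝ (deriv s) t)
    (heq : ∀ t ∈ Ici (0 : ℝ), deriv (deriv s) t = 6 * t - 6 * (s t) ^ 2)
    (h0 : s 0 = 0) (h0' : deriv s 0 = 0) :
    ∃ δ : ℝ, 0 < δ ∧ ∀ u ∈ Ioc (0:ℝ) δ, 0 < s u := by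
  have hd0 : HasDerivAt s 0 0 := by
    have := (hdiff 0 (by norm_num)).1.hasDerivAt
    rwa [h0'] at this
  have hlo := hd0.isLittleO
  rw [Asymptotics.isLittleO_iff] at hlo
  have h := hlo (c := 1/2) (by norm_num)
  rw [Metric.eventually_nhds_iff] at h
  obtain ⟨ε, hε, hball⟩ := h
  set δ : ℝ := min (ε/2) (1/2) with hδdef
  have hδpos : 0 < δ := lt_min (by linarith) (by norm_num)
  have hδle : δ ≤ 1/2 := min_le_right _ _
  have hbound : ∀ u ∈ Icc (0:ℝ) δ, |s u| ≤ u/2 := by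
    intro u hu
    have : dist u 0 < ε := by
      rw [Real.dist_eq, sub_zero, abs_of_nonneg hu.1]
      have := hu.2; have : u ≤ ε/2 := le_trans this (min_le_left _ _)
      linarith
    have h2 := hball this
    simp only [h0, sub_zero, ContinuousLinearMap.smulRight_apply,
      ContinuousLinearMap.one_apply, smul_eq_mul, mul_zero, Real.norm_eq_abs] at h2
    rw [abs_of_nonneg hu.1] at h2
    linarith
  refine ⟨δ, hδpos, ?_⟩
  have hmono' : StrictMonoOn (deriv s) (Icc 0 δ) := by
    apply strictMonoOn_of_deriv_pos (convex_Icc _ _)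
    · exact fun x hx => ((hdiff x hx.1).2.continuousAt).continuousWithinAt
    · intro x hx
      rw [interior_Icc] at hx
      rw [heq x hx.1.le]
      have hb := hbound x ⟨hx.1.le, hx.2.le⟩
      have h2 : s x ^ 2 ≤ (x/2)^2 := by
        rw [← sq_abs]
        apply pow_le_pow_left₀ (abs_nonneg _) hb
      nlinarith [hx.1, hx.2, hδle]
  have hspos' : ∀ x ∈ Ioc (0:ℝ) δ, 0 < deriv s x := by
    intro x hx
    have := hmono' (left_mem_Icc.2 hδpos.le) ⟨hx.1.le, hx.2⟩ hx.1
    rwa [h0'] at this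
  have hmono : StrictMonoOn s (Icc 0 δ) := by
    apply strictMonoOn_of_deriv_pos (convex_Icc _ _)
    · exact fun x hx => ((hdiff x hx.1).1.continuousAt).continuousWithinAt
    · intro x hx
      rw [interior_Icc] at hx
      exact hspos' x ⟨hx.1, hx.2.le⟩
  intro u hu
  have := hmono (left_mem_Icc.2 hδpos.le) ⟨hu.1.le, hu.2⟩ hu.1
  rwa [h0] at this

theorem painleve_positive
    (s : ℝ → ℝ)
    (hdiff : ∀ t ∈ Ici (0 : ℝ), DifferentiableAt ℝ s t ∧ DifferentiableAt ℝ (deriv s) t)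
    (heq : ∀ t ∈ Ici (0 : ℝ), deriv (deriv s) t = 6 * t - 6 * (s t) ^ 2)
    (h0 : s 0 = 0) (h0' : deriv s 0 = 0) :
    ∀ t : ℝ, 0 < t → 0 < s t := by
  obtain ⟨δ, hδpos, hδ⟩ := painleve_aux s hdiff heq h0 h0'
  intro t ht
  by_contra hneg
  push_neg at hneg
  have hcontAt : ∀ u : ℝ, 0 ≤ u → ContinuousAt s u := fun u hu => (hdiff u hu).1.continuousAt
  have htδ : δ < t := by
    by_contra h
    push_neg at h
    exact absurd (hδ t ⟨ht, h⟩) (not_lt.2 hneg)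
  set S : Set ℝ := {u | δ ≤ u ∧ s u ≤ 0} with hS
  have hSne : S.Nonempty := ⟨t, htδ.le, hneg⟩
  have hSbd : BddBelow S := ⟨δ, fun u hu => hu.1⟩
  set T := sInf S with hTdef
  have hTδ : δ ≤ T := le_csInf hSne fun u hu => hu.1
  have hTpos : 0 < T := lt_of_lt_of_le hδpos hTδ
  have hSclosed : IsClosed S := by
    apply IsSeqClosed.isClosed
    intro x l hx hl
    have h1 : δ ≤ l := ge_of_tendsto hl (Filter.Eventually.of_forall fun n => (hx n).1)
    refine ⟨h1, ?_⟩
    have hc : Filter.Tendsto (fun n => s (x n)) Filter.atTop (nhds (s l)) :=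
      ((hcontAt l (hδpos.le.trans h1)).tendsto).comp hl
    exact le_of_tendsto hc (Filter.Eventually.of_forall fun n => (hx n).2)
  have hTS : T ∈ S := hSclosed.csInf_mem hSne hSbd
  have hpos_before : ∀ u : ℝ, 0 < u → u < T → 0 < s u := by
    intro u hu huT
    rcases le_or_gt u δ with h | h
    · exact hδ u ⟨hu, h⟩
    · by_contra hc
      push_neg at hc
      exact absurd (csInf_le hSbd (⟨h.le, hc⟩ : u ∈ S)) (not_le.2 huT)
  have hsT0 : s T = 0 := by
    refine le_antisymm hTS.2 ?_
    have hc : Filter.Tendsto s (nhdsWithin T (Iio T)) (nhds (s T)) :=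
      ((hcontAt T hTpos.le).continuousWithinAt).tendsto
    refine ge_of_tendsto hc ?_
    filter_upwards [Ioo_mem_nhdsLT hTpos] with u hu
    exact (hpos_before u hu.1 hu.2).le
  have hcontOn : ContinuousOn s (Icc 0 T) := fun x hx => (hcontAt x hx.1).continuousWithinAt
  have hint : IntervalIntegrable s MeasureTheory.volume 0 T :=
    hcontOn.intervalIntegrable_of_Icc hTpos.le
  set E : ℝ → ℝ := fun u =>
    (deriv s u) ^ 2 + 4 * (s u) ^ 3 + 12 * (∫ v in (0:ℝ)..u, s v) - 12 * u * s u with hE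
  have c1 : ContinuousOn (deriv s) (Icc 0 T) := fun x hx =>
    ((hdiff x hx.1).2.continuousAt).continuousWithinAt
  have c3 : ContinuousOn (fun u => ∫ v in (0:ℝ)..u, s v) (Icc 0 T) := by
    have := intervalIntegral.continuousOn_primitive_interval' hint
      (left_mem_uIcc : (0:ℝ) ∈ uIcc 0 T)
    rwa [uIcc_of_le hTpos.le] at this
  have hEcont : ContinuousOn E (Icc 0 T) := by
    exact (((c1.pow 2).add (continuousOn_const.mul (hcontOn.pow 3))).add
      (continuousOn_const.mul c3)).sub
      ((continuousOn_const.mul continuousOn_id).mul hcontOn)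
  have hEderiv : ∀ x ∈ Ico (0:ℝ) T, HasDerivWithinAt E 0 (Ici x) x := by
    intro x hx
    have hx0 : (0:ℝ) ≤ x := hx.1
    have hds : HasDerivAt s (deriv s x) x := (hdiff x hx0).1.hasDerivAt
    have hds' : HasDerivAt (deriv s) (6 * x - 6 * (s x) ^ 2) x := by
      have := (hdiff x hx0).2.hasDerivAt
      rwa [heq x hx0] at this
    have hint_x : IntervalIntegrable s MeasureTheory.volume 0 x :=
      (hcontOn.mono (Icc_subset_Icc_right hx.2.le)).intervalIntegrable_of_Icc hx0
    have hcIoo : ContinuousOn s (Ioo x T) := fun u hu =>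
      (hcontAt u (hx0.trans hu.1.le)).continuousWithinAt
    have hmeas : StronglyMeasurableAtFilter s (nhdsWithin x (Ioi x))
        MeasureTheory.volume :=
      ⟨Ioo x T, Ioo_mem_nhdsGT hx.2,
        hcIoo.aestronglyMeasurable measurableSet_Ioo⟩
    have hFTC : HasDerivWithinAt (fun u => ∫ v in (0:ℝ)..u, s v) (s x) (Ici x) x :=
      intervalIntegral.integral_hasDerivWithinAt_right hint_x hmeas
        (hcontAt x hx0).continuousWithinAt
    have h1 : HasDerivWithinAt (fun u => (deriv s u) ^ 2)
        ((2 : ℕ) * deriv s x ^ 1 * (6 * x - 6 * (s x) ^ 2)) (Ici x) x :=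
      (hds'.pow 2).hasDerivWithinAt
    have h2 : HasDerivWithinAt (fun u => 4 * (s u) ^ 3)
        (4 * ((3 : ℕ) * s x ^ 2 * deriv s x)) (Ici x) x :=
      ((hds.pow 3).const_mul 4).hasDerivWithinAt
    have h3 : HasDerivWithinAt (fun u => 12 * (∫ v in (0:ℝ)..u, s v)) (12 * s x) (Ici x) x :=
      hFTC.const_mul 12
    have h4 : HasDerivWithinAt (fun u => 12 * u * s u)
        (12 * 1 * s x + 12 * x * deriv s x) (Ici x) x :=
      (((hasDerivAt_id x).const_mul 12).mul hds).hasDerivWithinAt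
    have := ((h1.add h2).add h3).sub h4
    refine this.congr_deriv ?_
    push_cast
    ring
  have hEconst := constant_of_has_deriv_right_zero hEcont hEderiv T (right_mem_Icc.2 hTpos.le)
  have hE0 : E 0 = 0 := by
    simp [hE, h0, h0']
  have hIpos : 0 < ∫ v in (0:ℝ)..T, s v :=
    intervalIntegral.intervalIntegral_pos_of_pos_on hint
      (fun u hu => hpos_before u hu.1 hu.2) hTpos
  have hET : 0 < E T := by
    rw [hE]
    simp only [hsT0]
    nlinarith [sq_nonneg (deriv s T)]
  rw [hEconst, hE0] at hET
  exact lt_irrefl 0 hET
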